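/- Let T > 0 and let f : [0,T] → ℝ be continuous with f(0) ≥ 0. Then the function m_f(t) := sup_{0 ≤ s ≤ t} max(−f(s), 0) is continuous and nondecreasing with m_f(0) = 0, the function x_f := f + m_f satisfies x_f(t) ≥ 0 for all t ∈ [0,T], and the Lebesgue–Stieltjes measure induced by m_f assigns zero mass to the set {s ∈ [0,T] : x_f(s) > 0}. -/

import Mathlib

open Set MeasureTheory

/-- The Skorohod reflection term: `m_f(t) = sup_{0 ≤ s ≤ t} max(-f(s), 0)`. -/
noncomputable def mf (f : ℝ → ℝ) (t : ℝ) : ℝ :=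
  sSup ((fun s => max (-f s) 0) '' Set.Icc 0 t)

section aux

variable {T : ℝ} {f : ℝ → ℝ}

private lemma g_cont (hf : ContinuousOn f (Set.Icc 0 T)) :
    ContinuousOn (fun s => max (-f s) 0) (Set.Icc 0 T) :=
  (continuous_id.max continuous_const).comp_continuousOn hf.neg

private lemma g_bdd (hf : ContinuousOn f (Set.Icc 0 T)) {t : ℝ} (ht : t ∈ Set.Icc 0 T) :
    BddAbove ((fun s => max (-f s) 0) '' Set.Icc 0 t) :=
  (isCompact_Icc.image_of_continuousOn
    ((g_cont hf).mono (Icc_subset_Icc le_rfl ht.2))).bddAbove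

private lemma le_mf (hf : ContinuousOn f (Set.Icc 0 T)) {t u : ℝ} (ht : t ∈ Set.Icc 0 T)
    (hu : u ∈ Set.Icc 0 t) : max (-f u) 0 ≤ mf f t :=
  le_csSup (g_bdd hf ht) (mem_image_of_mem _ hu)

private lemma mf_nonneg (hf : ContinuousOn f (Set.Icc 0 T)) {t : ℝ} (ht : t ∈ Set.Icc 0 T) :
    0 ≤ mf f t :=
  le_trans (le_max_right _ _) (le_mf hf ht (left_mem_Icc.2 ht.1))

private lemma mf_mono (hf : ContinuousOn f (Set.Icc 0 T)) :
    MonotoneOn (mf f) (Set.Icc 0 T) := by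
  intro a ha b hb hab
  exact csSup_le_csSup (g_bdd hf hb)
    ((nonempty_Icc.2 ha.1).image _)
    (image_mono (Icc_subset_Icc le_rfl hab))

private lemma mf_le (hf : ContinuousOn f (Set.Icc 0 T)) {t c : ℝ} (ht : t ∈ Set.Icc 0 T)
    (h : ∀ u ∈ Set.Icc 0 t, max (-f u) 0 ≤ c) : mf f t ≤ c :=
  csSup_le ((nonempty_Icc.2 ht.1).image _) (by rintro _ ⟨u, hu, rfl⟩; exact h u hu)

private lemma mf_zero (hf0 : 0 ≤ f 0) : mf f 0 = 0 := by
  have : Set.Icc (0:ℝ) 0 = {0} := Icc_self 0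
  simp [mf, this, neg_nonpos.2 hf0]

/-- local constancy of `mf f` at points where the reflected path is positive -/
private lemma mf_locally_const (hf : ContinuousOn f (Set.Icc 0 T)) (hf0 : 0 ≤ f 0)
    {s : ℝ} (hs : s ∈ Set.Icc 0 T) (hx : 0 < f s + mf f s) :
    ∃ δ > 0, ∀ t ∈ Set.Icc 0 T, |t - s| < δ → mf f t = mf f s := by
  set m := mf f s with hm
  have hmnn : 0 ≤ m := mf_nonneg hf hs
  have hfs : -f s < m := by linarith
  have hε : 0 < (m + f s) / 2 := by linarith
  obtain ⟨δ, hδ, hδf⟩ := Metric.continuousWithinAt_iff.1 (hf s hs) _ hε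
  refine ⟨δ, hδ, ?_⟩
  have key : ∀ u ∈ Set.Icc 0 T, |u - s| < δ → -f u < (m - f s) / 2 := by
    intro u hu hud
    have := hδf hu hud
    rw [Real.dist_eq, abs_lt] at this
    linarith [this.1, this.2]
  intro t ht htd
  rcases eq_or_lt_of_le hmnn with hm0 | hmpos
  · -- m = 0
    have hm0' : m = 0 := hm0.symm
    have hfspos : 0 < f s := by linarith
    rcases le_total t s with hts | hst
    · refine le_antisymm (mf_mono hf ht hs hts) ?_
      calc mf f s = 0 := hm0'
        _ ≤ mf f t := mf_nonneg hf ht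
    · refine le_antisymm ?_ (mf_mono hf hs ht hst)
      have h0 : mf f t ≤ 0 := by
        refine mf_le hf ht fun u hu => ?_
        rcases le_total u s with hus | hsu
        · have := le_mf hf hs ⟨hu.1, hus⟩; linarith
        · have hud : |u - s| < δ := by
            rw [abs_sub_lt_iff]; rw [abs_sub_lt_iff] at htd
            constructor <;> [linarith [hu.2]; linarith]
          have h1 := key u ⟨hu.1, le_trans hu.2 ht.2⟩ hud
          have h2 : -f u < 0 := by linarith
          exact max_le h2.le le_rfl
      calc mf f t ≤ 0 := h0
        _ = mf f s := hm0
  · -- m > 0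
    have hc : ∀ u ∈ Set.Icc 0 T, |u - s| < δ → max (-f u) 0 < m := by
      intro u hu hud
      have := key u hu hud
      have h2 : (m - f s) / 2 < m := by linarith
      exact max_lt (lt_trans this h2) hmpos
    rcases le_total t s with hts | hst
    · -- left: maximizer argument
      obtain ⟨u, hu, husup⟩ := IsCompact.exists_sSup_image_eq isCompact_Icc
        (nonempty_Icc.2 hs.1) ((g_cont hf).mono (Icc_subset_Icc le_rfl hs.2))
      have hum : max (-f u) 0 = m := husup.symm
      have hut : u ≤ t := by
        by_contra hcon
        push_neg at hcon
        have hud : |u - s| < δ := by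
          rw [abs_sub_lt_iff]; rw [abs_sub_lt_iff] at htd
          constructor <;> [linarith [hu.2]; linarith [hu.2, htd.2]]
        exact absurd hum (ne_of_lt (hc u ⟨hu.1, le_trans hu.2 hs.2⟩ hud))
      refine le_antisymm (mf_mono hf ht hs hts) ?_
      rw [← hum]
      exact le_mf hf ht ⟨hu.1, hut⟩
    · refine le_antisymm ?_ (mf_mono hf hs ht hst)
      refine mf_le hf ht fun u hu => ?_
      rcases le_total u s with hus | hsu
      · exact le_mf hf hs ⟨hu.1, hus⟩
      · have hud : |u - s| < δ := by
          rw [abs_sub_lt_iff]; rw [abs_sub_lt_iff] at htd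
          constructor <;> [linarith [hu.2]; linarith]
        exact le_of_lt (hc u ⟨hu.1, le_trans hu.2 ht.2⟩ hud)

private lemma mf_contOn (hf : ContinuousOn f (Set.Icc 0 T)) :
    ContinuousOn (mf f) (Set.Icc 0 T) := by
  intro s hs
  rw [Metric.continuousWithinAt_iff]
  intro ε hε
  have hε3 : 0 < ε / 3 := by linarith
  obtain ⟨δ, hδ, hδg⟩ := Metric.continuousWithinAt_iff.1 (g_cont hf s hs) _ hε3
  refine ⟨δ, hδ, fun {t} ht htd => ?_⟩
  rw [Real.dist_eq] at htd ⊢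
  have hgnear : ∀ u ∈ Set.Icc 0 T, |u - s| < δ →
      max (-f u) 0 < max (-f s) 0 + ε / 3 := by
    intro u hu hud
    have := hδg hu (by rwa [Real.dist_eq])
    rw [Real.dist_eq, abs_lt] at this
    linarith [this.2]
  have hgs : max (-f s) 0 ≤ mf f s := le_mf hf hs (right_mem_Icc.2 hs.1)
  rw [abs_lt]
  rcases le_total t s with hts | hst
  · have h1 : mf f t ≤ mf f s := mf_mono hf ht hs hts
    -- mf f s ≤ mf f t + 2ε/3
    have h2 : mf f s ≤ mf f t + 2 * (ε / 3) := by
      refine mf_le hf hs fun u hu => ?_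
      rcases le_total u t with hut | htu
      · have := le_mf hf ht ⟨hu.1, hut⟩; linarith
      · have hud : |u - s| < δ := by
          rw [abs_sub_lt_iff]; rw [abs_sub_lt_iff] at htd
          constructor <;> [linarith [hu.2]; linarith]
        have hu1 := hgnear u ⟨hu.1, le_trans hu.2 hs.2⟩ hud
        -- g s ≤ g t + ε/3
        have hsg : max (-f s) 0 < max (-f t) 0 + ε / 3 := by
          have := hδg ht (by rwa [Real.dist_eq])
          rw [Real.dist_eq, abs_lt] at this
          linarith [this.1]
        have hgt : max (-f t) 0 ≤ mf f t := le_mf hf ht (right_mem_Icc.2 ht.1)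
        linarith
    constructor <;> linarith
  · have h1 : mf f s ≤ mf f t := mf_mono hf hs ht hst
    have h2 : mf f t ≤ mf f s + ε / 3 := by
      refine mf_le hf ht fun u hu => ?_
      rcases le_total u s with hus | hsu
      · have := le_mf hf hs ⟨hu.1, hus⟩; linarith
      · have hud : |u - s| < δ := by
          rw [abs_sub_lt_iff]; rw [abs_sub_lt_iff] at htd
          constructor <;> [linarith [hu.2]; linarith]
        have := hgnear u ⟨hu.1, le_trans hu.2 ht.2⟩ hud
        linarith
    constructor <;> linarith

end aux

/-- Skorohod's lemma, existence part: `m_f` is continuous, nondecreasing, vanishes at `0`,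
the reflected path `x_f = f + m_f` is nonnegative on `[0,T]`, and the Lebesgue–Stieltjes
measure induced by `m_f` assigns zero mass to `{s ∈ [0,T] : x_f(s) > 0}`. -/
theorem stmt_0 (T : ℝ) (hT : 0 < T) (f : ℝ → ℝ)
    (hf : ContinuousOn f (Set.Icc 0 T)) (hf0 : 0 ≤ f 0) :
    ContinuousOn (mf f) (Set.Icc 0 T) ∧
    MonotoneOn (mf f) (Set.Icc 0 T) ∧
    mf f 0 = 0 ∧
    (∀ t ∈ Set.Icc 0 T, 0 ≤ f t + mf f t) ∧
    ∃ S : StieltjesFunction ℝ,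
      (∀ t : ℝ, S t = mf f (min (max t 0) T)) ∧
      S.measure {s | s ∈ Set.Icc 0 T ∧ 0 < f s + mf f s} = 0 := by
  have hT' : (0:ℝ) ≤ T := hT.le
  -- the clamp function
  set clamp : ℝ → ℝ := fun t => min (max t 0) T with hclamp
  have hclamp_mem : ∀ t, clamp t ∈ Set.Icc 0 T := fun t =>
    ⟨le_min (le_max_right _ _) hT', min_le_right _ _⟩
  have hclamp_id : ∀ t ∈ Set.Icc 0 T, clamp t = t := fun t ht => by
    simp [hclamp, max_eq_left ht.1, min_eq_left ht.2]
  have hclamp_lip : ∀ t s, |clamp t - clamp s| ≤ |t - s| := by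
    intro t s
    calc |clamp t - clamp s| ≤ max |max t 0 - max s 0| |T - T| := by
          exact abs_min_sub_min_le_max _ _ _ _
      _ ≤ |t - s| := by
          simp only [sub_self, abs_zero]
          exact max_le (abs_max_sub_max_le_abs _ _ _) (abs_nonneg _)
  have hclamp_cont : Continuous clamp := by
    exact (continuous_id.max continuous_const).min continuous_const
  have hclamp_mono : Monotone clamp := fun a b h =>
    min_le_min (max_le_max h le_rfl) le_rfl
  have hcont := mf_contOn hf
  have hmono := mf_mono hf
  have hzero := mf_zero (f := f) hf0
  refine ⟨hcont, hmono, hzero, ?_, ?_⟩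
  · intro t ht
    have := le_mf hf ht (right_mem_Icc.2 ht.1)
    have h2 : -f t ≤ mf f t := le_trans (le_max_left _ _) this
    linarith
  · -- Stieltjes function
    have hScont : Continuous fun t => mf f (clamp t) :=
      hcont.comp_continuous hclamp_cont hclamp_mem
    set S : StieltjesFunction ℝ :=
      { toFun := fun t => mf f (clamp t)
        mono' := fun a b h => hmono (hclamp_mem a) (hclamp_mem b) (hclamp_mono h)
        right_continuous' := fun x => hScont.continuousWithinAt } with hS
    refine ⟨S, fun t => rfl, ?_⟩
    apply measure_null_of_locally_null
    rintro s ⟨hs, hx⟩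
    obtain ⟨δ, hδ, hconst⟩ := mf_locally_const hf hf0 hs hx
    refine ⟨Set.Ioc (s - δ/2) (s + δ/2), ?_, ?_⟩
    · apply mem_nhdsWithin_of_mem_nhds
      exact Ioc_mem_nhds (by linarith) (by linarith)
    · rw [S.measure_Ioc]
      have hSconst : ∀ t, |t - s| ≤ δ/2 → S t = mf f s := by
        intro t htd
        have h1 : |clamp t - s| < δ := by
          have := hclamp_lip t s
          rw [hclamp_id s hs] at this
          linarith [le_trans this htd]
        exact hconst (clamp t) (hclamp_mem t) h1
      have habs : |δ/2| ≤ δ/2 := le_of_eq (abs_of_nonneg (by positivity))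
      have e1 : S (s + δ/2) = mf f s := hSconst _ (by
        have : s + δ/2 - s = δ/2 := by ring
        rw [this]; exact habs)
      have e2 : S (s - δ/2) = mf f s := hSconst _ (by
        have : s - δ/2 - s = -(δ/2) := by ring
        rw [this, abs_neg]; exact habs)
      rw [show S (s + δ/2) = ((S (s + δ/2) : ℝ)) from rfl] at e1
      rw [e1, e2, sub_self, ENNReal.ofReal_zero]
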